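/- In an elementwise-filtered based chain complex over a field, every homology class has a unique lexicographically minimal representative cycle: if z is lexicographically minimal and c is a homologous cycle with c ⊑ z, then c = z. -/

import Mathlib

open Classical Finset

noncomputable section

variable {𝕜 : Type} [Field 𝕜] {l : ℕ}

/-- The support of a coordinate vector: the set of basis indices with nonzero coefficient. -/
def vsupp (c : Fin l → 𝕜) : Finset (Fin l) :=
  Finset.univ.filter (fun i => c i ≠ 0)

/-- The pivot of a coordinate vector: the maximal index of its support (`⊥` if zero). -/
def vpivot (c : Fin l → 𝕜) : WithBot (Fin l) := (vsupp c).max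

/-- The lexicographic order on finite subsets of a totally ordered set. -/
def finsetLexLe {α : Type*} [LinearOrder α] (A B : Finset α) : Prop :=
  A = B ∨ ∃ h : ((A \ B) ∪ (B \ A)).Nonempty, ((A \ B) ∪ (B \ A)).max' h ∈ B

/-- The lexicographic preorder on chains, comparing supports lexicographically. -/
def chainLexLe (c₁ c₂ : Fin l → 𝕜) : Prop := finsetLexLe (vsupp c₁) (vsupp c₂)

/-- The strict lexicographic preorder on chains. -/
def chainLexLt (c₁ c₂ : Fin l → 𝕜) : Prop :=
  chainLexLe c₁ c₂ ∧ vsupp c₁ ≠ vsupp c₂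

/-- A basis element is critical if it is contained in no pair of `V`. -/
def CriticalIn {l : ℕ} (V : Finset (Fin l × Fin l)) (a : Fin l) : Prop :=
  ∀ p ∈ V, p.1 ≠ a ∧ p.2 ≠ a

/-- A based chain complex with an elementwise filtration: the basis elements are
`σ_1 < … < σ_l` (indexed by `Fin l`), `deg` records their homological degree, and `D` is the
filtration boundary matrix (the column `D _ j` represents `∂σ_j`).  Monotonicity `filt`
expresses that the down sets of the filtration order span subcomplexes, `homog` that the
boundary map decreases degree by one, and `dd` that `∂ ∘ ∂ = 0`. -/
structure BasedChainComplex (𝕜 : Type) [Field 𝕜] (l : ℕ) where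
  deg : Fin l → ℕ
  D : Matrix (Fin l) (Fin l) 𝕜
  homog : ∀ i j, D i j ≠ 0 → deg i + 1 = deg j
  filt : ∀ i j, D i j ≠ 0 → i < j
  dd : D * D = 0

namespace BasedChainComplex

variable (C : BasedChainComplex 𝕜 l)

/-- `σ_i` is a facet of `σ_j` if `⟨∂σ_j, σ_i⟩ ≠ 0`. -/
def IsFacet (i j : Fin l) : Prop := C.D i j ≠ 0

/-- An algebraic gradient: a disjoint collection `V` of facet pairs arising from an
algebraic Morse function, i.e. a monotonic function `f` on the basis such that a facet
pair `(μ, η)` satisfies `f μ = f η` iff `(μ, η) ∈ V`. -/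
def IsAlgGradient (V : Finset (Fin l × Fin l)) : Prop :=
  (∀ p ∈ V, C.IsFacet p.1 p.2) ∧
  (∀ p ∈ V, ∀ q ∈ V, p ≠ q → p.1 ≠ q.1 ∧ p.1 ≠ q.2 ∧ p.2 ≠ q.1 ∧ p.2 ≠ q.2) ∧
  (∃ f : Fin l → ℝ, (∀ i j, C.IsFacet i j → f i ≤ f j) ∧
    (∀ i j, C.IsFacet i j → (f i = f j ↔ (i, j) ∈ V)))

/-- The chain homotopy `F` of an algebraic gradient `V`: the linear map with
`F σ = −⟨∂τ, σ⟩⁻¹ · τ` if `(σ, τ) ∈ V` and `F σ = 0` otherwise. -/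
def Fmap (V : Finset (Fin l × Fin l)) (c : Fin l → 𝕜) : Fin l → 𝕜 :=
  fun j => ∑ i, (if (i, j) ∈ V then -(C.D i j)⁻¹ else 0) * c i

/-- The flow of an algebraic gradient `V`: `Φ(c) = c + ∂F(c) + F(∂c)`. -/
def flow (V : Finset (Fin l × Fin l)) (c : Fin l → 𝕜) : Fin l → 𝕜 :=
  c + C.D.mulVec (C.Fmap V c) + C.Fmap V (C.D.mulVec c)

/-- A cycle of degree `n`: a chain with `∂z = 0` supported in degree `n`. -/
def IsCycle (n : ℕ) (z : Fin l → 𝕜) : Prop :=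
  C.D.mulVec z = 0 ∧ ∀ i, z i ≠ 0 → C.deg i = n

/-- `V` is `n`-reduced: for every pair `(a, b) ∈ V` with `a` of degree `n`,
the pivot of `∂b` equals `a`. -/
def NReduced (V : Finset (Fin l × Fin l)) (n : ℕ) : Prop :=
  ∀ p ∈ V, C.deg p.1 = n → vpivot (fun i => C.D i p.2) = (p.1 : WithBot (Fin l))

/-- `V` generates the `n`-boundaries: the gradient cofacet boundaries
`{∂b : (a,b) ∈ V, deg a = n}` span the space of boundaries of degree `n`. -/
def GeneratesBoundaries (V : Finset (Fin l × Fin l)) (n : ℕ) : Prop :=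
  ∀ e : Fin l → 𝕜, (∀ i, e i ≠ 0 → C.deg i = n + 1) →
    C.D.mulVec e ∈ Submodule.span 𝕜
      {x : Fin l → 𝕜 | ∃ p ∈ V, C.deg p.1 = n ∧ x = fun i => C.D i p.2}

/-- A chain is lexicographically minimal if no homologous chain is strictly smaller
in the lexicographic preorder. -/
def LexMinimal (z : Fin l → 𝕜) : Prop :=
  ∀ e : Fin l → 𝕜, ¬ chainLexLt (z + C.D.mulVec e) z

end BasedChainComplex

end


lemma lexlt_aux {α : Type} [LinearOrder α] {A B : Finset α} {m : α}
    (hB : m ∈ B) (hA : m ∉ A) (hbound0 : ∀ i, ¬(i ∈ A ↔ i ∈ B) → i ≤ m) :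
    finsetLexLe A B ∧ A ≠ B := by
  have hbound : ∀ i ∈ (A \ B) ∪ (B \ A), i ≤ m := by
    intro i hi
    apply hbound0
    rcases Finset.mem_union.mp hi with h | h <;> rw [Finset.mem_sdiff] at h <;> tauto
  have hmS : m ∈ (A \ B) ∪ (B \ A) :=
    Finset.mem_union_right _ (Finset.mem_sdiff.mpr ⟨hB, hA⟩)
  have hne : ((A \ B) ∪ (B \ A)).Nonempty := ⟨m, hmS⟩
  have hmax' : ((A \ B) ∪ (B \ A)).max' hne = m :=
    le_antisymm (Finset.max'_le _ _ _ hbound) (Finset.le_max' _ _ hmS)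
  exact ⟨Or.inr ⟨hne, hmax' ▸ hB⟩, fun h => hA (h ▸ hB)⟩

lemma lexle_contra {α : Type} [LinearOrder α] {A B : Finset α} {m : α}
    (h : finsetLexLe A B) (hA : m ∈ A) (hB : m ∉ B)
    (hbound0 : ∀ i, ¬(i ∈ A ↔ i ∈ B) → i ≤ m) : False := by
  have hbound : ∀ i ∈ (A \ B) ∪ (B \ A), i ≤ m := by
    intro i hi
    apply hbound0
    rcases Finset.mem_union.mp hi with h | h <;> rw [Finset.mem_sdiff] at h <;> tauto
  rcases h with heq | ⟨hS, hmem⟩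
  · exact hB (heq ▸ hA)
  · have hmS : m ∈ (A \ B) ∪ (B \ A) :=
      Finset.mem_union_left _ (Finset.mem_sdiff.mpr ⟨hA, hB⟩)
    have hmax' : ((A \ B) ∪ (B \ A)).max' hS = m :=
      le_antisymm (Finset.max'_le _ _ _ hbound) (Finset.le_max' _ _ hmS)
    exact hB (hmax' ▸ hmem)

/-- In an elementwise-filtered based chain complex over a field, every homology class has
a unique lexicographically minimal representative cycle: if `z` is lexicographically
minimal and `c` is a homologous cycle with `c ⊑ z`, then `c = z`. -/
theorem stmt15 {𝕜 : Type} [Field 𝕜] {l : ℕ} (C : BasedChainComplex 𝕜 l)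
    (n : ℕ) (z c : Fin l → 𝕜) (hz : C.IsCycle n z) (hc : C.IsCycle n c)
    (hmin : C.LexMinimal z) (hhom : ∃ e : Fin l → 𝕜, c - z = C.D.mulVec e)
    (hle : chainLexLe c z) : c = z := by
  by_contra hne
  obtain ⟨e, he⟩ := hhom
  set d : Fin l → 𝕜 := c - z with hd
  have hd0 : d ≠ 0 := sub_ne_zero.mpr hne
  have hex : ∃ i, d i ≠ 0 := by
    by_contra h
    push_neg at h
    exact hd0 (funext fun i => h i)
  obtain ⟨i0, hi0⟩ := hex
  have hsupp : (vsupp d).Nonempty := ⟨i0, by simp [vsupp, hi0]⟩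
  set m := (vsupp d).max' hsupp with hm
  have hmd : d m ≠ 0 := by
    have := Finset.max'_mem _ hsupp
    exact (Finset.mem_filter.mp this).2
  have hmax : ∀ i, d i ≠ 0 → i ≤ m :=
    fun i hi => Finset.le_max' _ i (by simp [vsupp, hi])
  have hdval : ∀ i, d i = c i - z i := fun i => rfl
  by_cases hzm : z m = 0
  · -- then c m ≠ 0, so the max of the symmetric difference lies in `vsupp c`,
    -- contradicting `hle`
    have hcm : c m ≠ 0 := by
      have : c m = d m + z m := by rw [hdval]; ring
      rw [this, hzm, add_zero]; exact hmd
    have hmA : m ∈ vsupp c := by simp [vsupp, hcm]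
    have hmB : m ∉ vsupp z := by simp [vsupp, hzm]
    refine lexle_contra hle hmA hmB ?_
    intro i hi
    apply hmax
    have : c i ≠ z i := by
      simp only [vsupp, Finset.mem_filter, Finset.mem_univ, true_and] at hi
      intro hEq; exact hi (by rw [hEq])
    rw [hdval]
    exact sub_ne_zero.mpr this
  · -- construct a strictly smaller homologous chain, contradicting `hmin`
    set t : 𝕜 := -(z m) / (d m) with ht
    have htne : t ≠ 0 := div_ne_zero (neg_ne_zero.mpr hzm) hmd
    have hDe : C.D.mulVec (t • e) = t • d := by
      rw [Matrix.mulVec_smul, ← he]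
    apply hmin (t • e)
    set z' : Fin l → 𝕜 := z + C.D.mulVec (t • e) with hz'
    have hz'val : ∀ i, z' i = z i + t * d i := by
      intro i; rw [hz', hDe]; simp [Pi.smul_apply, smul_eq_mul]
    have hz'm : z' m = 0 := by
      rw [hz'val, ht]
      field_simp
      ring
    have hmA : m ∉ vsupp z' := by simp [vsupp, hz'm]
    have hmB : m ∈ vsupp z := by simp [vsupp, hzm]
    refine lexlt_aux hmB hmA ?_
    intro i hi
    apply hmax
    have hne' : z' i ≠ z i := by
      simp only [vsupp, Finset.mem_filter, Finset.mem_univ, true_and] at hi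
      intro hEq; exact hi (by rw [hEq])
    intro hdi
    apply hne'
    rw [hz'val, hdi, mul_zero, add_zero]
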